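/- Let d ∈ {4,5}, let k be a natural number, and let G be a simple graph. Let v be a vertex of G, let 𝓜 be a matching adjacent to v of maximum size among all matchings adjacent to v, and let M be the set of vertices covered by 𝓜. Let X₁ ⊆ N(v) \ M be the set of vertices x with N(x) ∩ M ≠ ∅ and |N(x) ∩ {a, b}| ≤ 1 for every edge {a, b} ∈ 𝓜, and let M₁ = M ∩ N(X₁). Suppose M' ⊆ M₁ and X' ⊆ X₁ are sets such that there is a (d−1)-expansion Q from M' into X' (with X' exactly the set of vertices saturated by Q) and N(X') ⊆ M' ∪ {v}, and let x ∈ X'. Then G has a d-path vertex cover of size at most k if and only if the graph obtained from G by deleting the edge {x, v} has a d-path vertex cover of size at most k. -/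

import Mathlib

open SimpleGraph

/-- `S` is a `d`-path vertex cover of `G`. -/
def IsPVC {V : Type*} (G : SimpleGraph V) (d : ℕ) (S : Set V) : Prop :=
  ∀ ⦃u v : V⦄ (p : G.Walk u v), p.IsPath → p.length + 1 = d → ∃ x ∈ p.support, x ∈ S

/-- `M` (a finite set of ordered pairs, each representing an edge) is a matching in `G − v`
such that every edge of the matching has at least one endpoint adjacent to `v` in `G`. -/
def MatchingAdjTo {V : Type*} (G : SimpleGraph V) (v : V) (M : Finset (V × V)) : Prop :=
  (∀ e ∈ M, G.Adj e.1 e.2 ∧ e.1 ≠ v ∧ e.2 ≠ v ∧ (G.Adj v e.1 ∨ G.Adj v e.2)) ∧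
  (∀ e ∈ M, ∀ f ∈ M, e ≠ f → e.1 ≠ f.1 ∧ e.1 ≠ f.2 ∧ e.2 ≠ f.1 ∧ e.2 ≠ f.2)

/-- The set of vertices covered by the matching `M`. -/
def mCovered {V : Type*} (M : Finset (V × V)) : Set V :=
  {x | ∃ e ∈ M, e.1 = x ∨ e.2 = x}

/-- `N(U)`: the set of neighbors of vertices of `U` lying outside `U`. -/
def setNbrs {V : Type*} (G : SimpleGraph V) (U : Set V) : Set V :=
  {z | z ∉ U ∧ ∃ u ∈ U, G.Adj u z}

/-- `Q` is a `q`-expansion of `A'` into `B'`. -/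
def IsQExpansion {V : Type*} [DecidableEq V] (G : SimpleGraph V) (q : ℕ)
    (A' B' : Finset V) (Q : Finset (V × V)) : Prop :=
  (∀ e ∈ Q, e.1 ∈ A' ∧ e.2 ∈ B' ∧ G.Adj e.1 e.2) ∧
  (∀ a ∈ A', (Q.filter (fun e => e.1 = a)).card = q) ∧
  (Q.image Prod.snd).card = q * A'.card

section AuxLemmas

variable {V : Type*}

private lemma pvc4_hit {H : SimpleGraph V} {S : Set V} (hS : IsPVC H 4 S)
    {a b c e : V} (hab : H.Adj a b) (hbc : H.Adj b c) (hce : H.Adj c e)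
    (hac : a ≠ c) (hae : a ≠ e) (hbe : b ≠ e) :
    a ∈ S ∨ b ∈ S ∨ c ∈ S ∨ e ∈ S := by
  have hp : (Walk.cons hab (Walk.cons hbc (Walk.cons hce Walk.nil))).IsPath := by
    simp [Walk.isPath_def, hab.ne, hbc.ne, hce.ne, hac, hae, hbe]
  obtain ⟨z, hz, hzS⟩ := hS _ hp rfl
  simp only [Walk.support_cons, Walk.support_nil, List.mem_cons, List.not_mem_nil, or_false] at hz
  rcases hz with rfl|rfl|rfl|rfl <;> tauto

private lemma pvc5_hit {H : SimpleGraph V} {S : Set V} (hS : IsPVC H 5 S)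
    {a b c e f : V} (hab : H.Adj a b) (hbc : H.Adj b c) (hce : H.Adj c e) (hef : H.Adj e f)
    (hac : a ≠ c) (hae : a ≠ e) (haf : a ≠ f) (hbe : b ≠ e) (hbf : b ≠ f) (hcf : c ≠ f) :
    a ∈ S ∨ b ∈ S ∨ c ∈ S ∨ e ∈ S ∨ f ∈ S := by
  have hp : (Walk.cons hab (Walk.cons hbc (Walk.cons hce (Walk.cons hef Walk.nil)))).IsPath := by
    simp [Walk.isPath_def, hab.ne, hbc.ne, hce.ne, hef.ne, hac, hae, haf, hbe, hbf, hcf]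
  obtain ⟨z, hz, hzS⟩ := hS _ hp rfl
  simp only [Walk.support_cons, Walk.support_nil, List.mem_cons, List.not_mem_nil, or_false] at hz
  rcases hz with rfl|rfl|rfl|rfl|rfl <;> tauto

private lemma exists_adj_on_walk {G : SimpleGraph V} {u w : V} (p : G.Walk u w)
    (hl : p.length ≠ 0) {y : V} (hy : y ∈ p.support) : ∃ z ∈ p.support, G.Adj y z := by
  induction p with
  | nil => simp at hl
  | @cons u b w h q ih =>
    rw [Walk.support_cons, List.mem_cons] at hy
    rcases hy with rfl | hy
    · exact ⟨b, by simp [Walk.support_cons, Walk.start_mem_support], h⟩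
    · cases q with
      | nil =>
        simp only [Walk.support_nil, List.mem_singleton] at hy
        subst hy
        exact ⟨u, by simp, h.symm⟩
      | @cons b c w h' q' =>
        obtain ⟨z, hz, hadj⟩ := ih (by simp [Walk.length_cons]) hy
        exact ⟨z, by rw [Walk.support_cons]; exact List.mem_cons_of_mem _ hz, hadj⟩

private lemma cover_of_not_mem {G : SimpleGraph V} {x v : V} {d : ℕ} {S : Set V}
    (hS : IsPVC (G.deleteEdges {s(x, v)}) d S) {u w : V} (p : G.Walk u w) (hp : p.IsPath)
    (hlen : p.length + 1 = d) (hxv : x ∉ p.support ∨ v ∉ p.support) :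
    ∃ z ∈ p.support, z ∈ S := by
  have hedges : ∀ e ∈ p.edges, e ∈ (G.deleteEdges {s(x, v)}).edgeSet := by
    intro e he
    rw [edgeSet_deleteEdges]
    refine ⟨p.edges_subset_edgeSet he, ?_⟩
    simp only [Set.mem_singleton_iff]
    rintro rfl
    rcases hxv with hx | hv
    · exact hx (p.fst_mem_support_of_mem_edges he)
    · exact hv (p.snd_mem_support_of_mem_edges he)
  obtain ⟨z, hz, hzS⟩ := hS (p.transfer _ hedges) (hp.transfer _)
    (by rw [Walk.length_transfer]; exact hlen)
  rw [Walk.support_transfer] at hz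
  exact ⟨z, hz, hzS⟩

private lemma pvc_mono {G : SimpleGraph V} {d : ℕ} {S : Set V} (s : Set (Sym2 V))
    (h : IsPVC G d S) : IsPVC (G.deleteEdges s) d S := by
  intro u w p hp hlen
  have hedges : ∀ e ∈ p.edges, e ∈ G.edgeSet := by
    intro e he
    have := p.edges_subset_edgeSet he
    rw [edgeSet_deleteEdges] at this
    exact this.1
  obtain ⟨z, hz, hzS⟩ := h (p.transfer _ hedges) (hp.transfer _)
    (by rw [Walk.length_transfer]; exact hlen)
  rw [Walk.support_transfer] at hz
  exact ⟨z, hz, hzS⟩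

end AuxLemmas

/-- The expansion reduction rule: deleting the edge `{x, v}` preserves the existence of a
`d`-path vertex cover of size at most `k`, for `d ∈ {4,5}`. -/
theorem expansion_rule {V : Type*} [Fintype V] [DecidableEq V] (G : SimpleGraph V)
    (d k : ℕ) (hd : d = 4 ∨ d = 5)
    (v : V) (M : Finset (V × V)) (hM : MatchingAdjTo G v M)
    (hmax : ∀ N : Finset (V × V), MatchingAdjTo G v N → N.card ≤ M.card)
    (X₁ : Set V)
    (hX1 : X₁ = {x | x ∈ G.neighborSet v \ mCovered M ∧
      (G.neighborSet x ∩ mCovered M).Nonempty ∧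
      ∀ e ∈ M, ¬ (G.Adj x e.1 ∧ G.Adj x e.2)})
    (M' X' : Finset V) (Q : Finset (V × V))
    (hM' : ↑M' ⊆ mCovered M ∩ setNbrs G X₁)
    (hX' : ↑X' ⊆ X₁)
    (hexp : IsQExpansion G (d - 1) M' X' Q)
    (hsat : Q.image Prod.snd = X')
    (hNX' : setNbrs G ↑X' ⊆ ↑M' ∪ {v})
    (x : V) (hx : x ∈ X') :
    (∃ S : Finset V, S.card ≤ k ∧ IsPVC G d ↑S) ↔
      (∃ S : Finset V, S.card ≤ k ∧ IsPVC (G.deleteEdges {s(x, v)}) d ↑S) := by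
  classical
  obtain ⟨hQmem, hQdeg, hQcardim⟩ := hexp
  have hvx' : ∀ y ∈ X', G.Adj v y := by
    intro y hy
    have h := hX' hy
    rw [hX1] at h
    exact h.1.1
  have hMcov' : ∀ y ∈ X', y ∉ mCovered M := by
    intro y hy
    have h := hX' hy
    rw [hX1] at h
    exact h.1.2
  have hvnM : v ∉ mCovered M := by
    rintro ⟨e, he, h | h⟩
    · exact (hM.1 e he).2.1 h
    · exact (hM.1 e he).2.2.1 h
  have hM'cov : ∀ m ∈ M', (m : V) ∈ mCovered M := fun m hm => (hM' hm).1
  have hvM' : v ∉ M' := fun h => hvnM (hM'cov v h)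
  have hX'M' : ∀ y ∈ X', y ∉ M' := fun y hy h => hMcov' y hy (hM'cov y h)
  have hvX' : v ∉ X' := fun h => (hvx' v h).ne rfl
  have hxnev : x ≠ v := fun h => hvX' (h ▸ hx)
  have hindep : ∀ y ∈ X', ∀ z ∈ X', ¬ G.Adj y z := by
    intro y hy z hz hadj
    have hyv := hvx' y hy
    have hzv := hvx' z hz
    have hyM := hMcov' y hy
    have hzM := hMcov' z hz
    have hnm : (y, z) ∉ M := fun h => hyM ⟨(y, z), h, Or.inl rfl⟩
    have hmm : MatchingAdjTo G v (insert (y, z) M) := by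
      constructor
      · intro e he
        rcases Finset.mem_insert.mp he with rfl | he
        · exact ⟨hadj, hyv.ne', hzv.ne', Or.inl hyv⟩
        · exact hM.1 e he
      · intro e he f hf hef
        rcases Finset.mem_insert.mp he with rfl | he
        · rcases Finset.mem_insert.mp hf with rfl | hf
          · exact absurd rfl hef
          · exact ⟨fun h => hyM ⟨f, hf, Or.inl h.symm⟩, fun h => hyM ⟨f, hf, Or.inr h.symm⟩,
              fun h => hzM ⟨f, hf, Or.inl h.symm⟩, fun h => hzM ⟨f, hf, Or.inr h.symm⟩⟩
        · rcases Finset.mem_insert.mp hf with rfl | hf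
          · exact ⟨fun h => hyM ⟨e, he, Or.inl h⟩, fun h => hzM ⟨e, he, Or.inl h⟩,
              fun h => hyM ⟨e, he, Or.inr h⟩, fun h => hzM ⟨e, he, Or.inr h⟩⟩
          · exact hM.2 e he f hf hef
    have hc := hmax _ hmm
    rw [Finset.card_insert_of_notMem hnm] at hc
    omega
  have hNbr : ∀ y ∈ X', ∀ z : V, G.Adj y z → z ∈ M' ∨ z = v := by
    intro y hy z hadj
    by_cases hzX : z ∈ X'
    · exact absurd hadj (hindep y hy z hzX)
    · have hmem : z ∈ setNbrs G (↑X' : Set V) :=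
        ⟨by simpa using hzX, y, by simpa using hy, hadj⟩
      rcases hNX' hmem with h | h
      · exact Or.inl (by simpa using h)
      · exact Or.inr (by simpa using h)
  have hQcard : Q.card = (d - 1) * M'.card := by
    rw [Finset.card_eq_sum_card_fiberwise (fun e he => (hQmem e he).1)]
    rw [Finset.sum_congr rfl (fun a ha => hQdeg a ha), Finset.sum_const, smul_eq_mul, mul_comm]
  have hinj : Set.InjOn (Prod.snd : V × V → V) ↑Q := Finset.card_image_iff.mp (by rw [hQcardim, hQcard])
  set leaves : V → Finset V := fun m => (Q.filter (fun e => e.1 = m)).image Prod.snd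
    with hleavesdef
  have hleafcard : ∀ m ∈ M', (leaves m).card = d - 1 := by
    intro m hm
    rw [hleavesdef]
    rw [Finset.card_image_of_injOn (hinj.mono (Finset.coe_subset.mpr (Finset.filter_subset _ _)))]
    exact hQdeg m hm
  have hleafX' : ∀ m, ∀ y ∈ leaves m, y ∈ X' := by
    intro m y hy
    rw [← hsat]
    obtain ⟨e, he, he2⟩ := Finset.mem_image.mp hy
    exact Finset.mem_image.mpr ⟨e, (Finset.mem_filter.mp he).1, he2⟩
  have hleafadj : ∀ m, ∀ y ∈ leaves m, G.Adj m y := by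
    intro m y hy
    obtain ⟨e, he, he2⟩ := Finset.mem_image.mp hy
    obtain ⟨heQ, h1⟩ := Finset.mem_filter.mp he
    have h2 := (hQmem e heQ).2.2
    rw [h1, he2] at h2
    exact h2
  have hleafuniq : ∀ m m' y, y ∈ leaves m → y ∈ leaves m' → m = m' := by
    intro m m' y hy hy'
    obtain ⟨e, he, he2⟩ := Finset.mem_image.mp hy
    obtain ⟨f, hf, hf2⟩ := Finset.mem_image.mp hy'
    obtain ⟨heQ, h1⟩ := Finset.mem_filter.mp he
    obtain ⟨hfQ, h2⟩ := Finset.mem_filter.mp hf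
    have hef : e = f := hinj heQ hfQ (he2.trans hf2.symm)
    rw [← h1, ← h2, hef]
  have hpartner : ∃ m₀ ∈ M', x ∈ leaves m₀ := by
    have hx2 := hx
    rw [← hsat] at hx2
    obtain ⟨e, he, he2⟩ := Finset.mem_image.mp hx2
    exact ⟨e.1, (hQmem e he).1,
      Finset.mem_image.mpr ⟨e, Finset.mem_filter.mpr ⟨he, rfl⟩, he2⟩⟩
  set G' := G.deleteEdges {s(x, v)} with hG'def
  have hadjG' : ∀ {a b : V}, G.Adj a b → ¬(a = x ∧ b = v) → ¬(b = x ∧ a = v) → G'.Adj a b := by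
    intro a b hab h1 h2
    rw [hG'def, deleteEdges_adj]
    refine ⟨hab, ?_⟩
    simp only [Set.mem_singleton_iff, Sym2.eq_iff]
    tauto
  constructor
  · rintro ⟨S, hScard, hSpvc⟩
    exact ⟨S, hScard, pvc_mono _ hSpvc⟩
  · rintro ⟨S, hScard, hSpvc⟩
    by_cases hvS : v ∈ S
    · refine ⟨S, hScard, fun u w p hp hlen => ?_⟩
      by_cases hvp : v ∈ p.support
      · exact ⟨v, hvp, Finset.mem_coe.mpr hvS⟩
      · exact cover_of_not_mem hSpvc p hp hlen (Or.inr hvp)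
    by_cases hxS : x ∈ S
    · refine ⟨S, hScard, fun u w p hp hlen => ?_⟩
      by_cases hxp : x ∈ p.support
      · exact ⟨x, hxp, Finset.mem_coe.mpr hxS⟩
      · exact cover_of_not_mem hSpvc p hp hlen (Or.inl hxp)
    -- main case : v ∉ S, x ∉ S
    have hclaim : ∀ m ∈ M', m ∉ S → 2 ≤ ((leaves m) ∩ S).card := by
      intro m hm hmS
      by_contra hlt
      push_neg at hlt
      have hsplit := Finset.card_inter_add_card_sdiff (leaves m) S
      have hlc := hleafcard m hm
      have hmv : m ≠ v := fun h => hvM' (h ▸ hm)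
      have hmx : m ≠ x := fun h => hX'M' x hx (h ▸ hm)
      rcases hd with hd' | hd'
      · -- d = 4
        subst hd'
        obtain ⟨y0, hy0, z0, hz0, hyz0⟩ := Finset.one_lt_card.mp
          (show 1 < ((leaves m) \ S).card by omega)
        obtain ⟨y, hy, z, hz, hyz, hzx⟩ : ∃ y ∈ leaves m \ S, ∃ z ∈ leaves m \ S,
            y ≠ z ∧ z ≠ x := by
          by_cases h : z0 = x
          · exact ⟨z0, hz0, y0, hy0, Ne.symm hyz0, fun hh => hyz0 ((h.trans hh.symm).symm)⟩
          · exact ⟨y0, hy0, z0, hz0, hyz0, h⟩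
        obtain ⟨hyL, hyS⟩ := Finset.mem_sdiff.mp hy
        obtain ⟨hzL, hzS⟩ := Finset.mem_sdiff.mp hz
        have hyX := hleafX' m y hyL
        have hzX := hleafX' m z hzL
        have e1 : G'.Adj y m := hadjG' (hleafadj m y hyL).symm (fun h => hmv h.2)
          (fun h => hmx h.1)
        have e2 : G'.Adj m z := hadjG' (hleafadj m z hzL) (fun h => hmx h.1) (fun h => hzx h.1)
        have e3 : G'.Adj z v := hadjG' (hvx' z hzX).symm (fun h => hzx h.1)
          (fun h => hxnev h.1.symm)
        rcases pvc4_hit hSpvc e1 e2 e3 hyz (fun h => hvX' (h ▸ hyX)) hmv with h | h | h | h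
        · exact hyS (Finset.mem_coe.mp h)
        · exact hmS (Finset.mem_coe.mp h)
        · exact hzS (Finset.mem_coe.mp h)
        · exact hvS (Finset.mem_coe.mp h)
      · -- d = 5
        subst hd'
        obtain ⟨y, hy⟩ := Finset.card_pos.mp (show 0 < ((leaves m) \ S).card by omega)
        obtain ⟨z, hz, o, ho, hzo⟩ := Finset.one_lt_card.mp
          (show 1 < (((leaves m) \ S).erase y).card by
            rw [Finset.card_erase_of_mem hy]; omega)
        have hzy := Finset.ne_of_mem_erase hz
        have hoy := Finset.ne_of_mem_erase ho
        replace hz := Finset.mem_of_mem_erase hz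
        replace ho := Finset.mem_of_mem_erase ho
        have hcore : ∀ p q r : V, p ∈ leaves m \ S → q ∈ leaves m \ S → r ∈ leaves m \ S →
            p ≠ q → p ≠ r → q ≠ r → q ≠ x → r ≠ x → False := by
          intro p q r hp hq hr hpq hpr hqr hqx hrx
          obtain ⟨hpL, hpS⟩ := Finset.mem_sdiff.mp hp
          obtain ⟨hqL, hqS⟩ := Finset.mem_sdiff.mp hq
          obtain ⟨hrL, hrS⟩ := Finset.mem_sdiff.mp hr
          have hpX := hleafX' m p hpL
          have hqX := hleafX' m q hqL
          have hrX := hleafX' m r hrL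
          by_cases hpx : p = x
          · -- path q – v – r – m – p
            have e1 : G'.Adj q v := hadjG' (hvx' q hqX).symm (fun h => hqx h.1)
              (fun h => hxnev h.1.symm)
            have e2 : G'.Adj v r := hadjG' (hvx' r hrX) (fun h => hxnev h.1.symm)
              (fun h => hrx h.1)
            have e3 : G'.Adj r m := hadjG' (hleafadj m r hrL).symm (fun h => hrx h.1)
              (fun h => hmx h.1)
            have e4 : G'.Adj m p := hadjG' (hleafadj m p hpL) (fun h => hmx h.1)
              (fun h => hmv h.2)
            rcases pvc5_hit hSpvc e1 e2 e3 e4 hqr (fun h => hX'M' m (h ▸ hqX) hm)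
              (Ne.symm hpq) (Ne.symm hmv) (fun h => hvX' (h.symm ▸ hpX)) (Ne.symm hpr)
              with h | h | h | h | h
            · exact hqS (Finset.mem_coe.mp h)
            · exact hvS (Finset.mem_coe.mp h)
            · exact hrS (Finset.mem_coe.mp h)
            · exact hmS (Finset.mem_coe.mp h)
            · exact hpS (Finset.mem_coe.mp h)
          · -- path p – m – q – v – r
            have e1 : G'.Adj p m := hadjG' (hleafadj m p hpL).symm (fun h => hmv h.2)
              (fun h => hmx h.1)
            have e2 : G'.Adj m q := hadjG' (hleafadj m q hqL) (fun h => hmx h.1)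
              (fun h => hqx h.1)
            have e3 : G'.Adj q v := hadjG' (hvx' q hqX).symm (fun h => hqx h.1)
              (fun h => hxnev h.1.symm)
            have e4 : G'.Adj v r := hadjG' (hvx' r hrX) (fun h => hxnev h.1.symm)
              (fun h => hrx h.1)
            rcases pvc5_hit hSpvc e1 e2 e3 e4 hpq (fun h => hvX' (h ▸ hpX)) hpr
              hmv (fun h => hX'M' r hrX (h ▸ hm)) hqr
              with h | h | h | h | h
            · exact hpS (Finset.mem_coe.mp h)
            · exact hmS (Finset.mem_coe.mp h)
            · exact hqS (Finset.mem_coe.mp h)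
            · exact hvS (Finset.mem_coe.mp h)
            · exact hrS (Finset.mem_coe.mp h)
        by_cases hyx : y = x
        · exact hcore y z o hy hz ho (Ne.symm hzy) (Ne.symm hoy) hzo
            (fun h => hzy (h.trans hyx.symm)) (fun h => hoy (h.trans hyx.symm))
        · by_cases hzx : z = x
          · exact hcore z y o hz hy ho hzy hzo (Ne.symm hoy) hyx
              (fun h => hzo (hzx.trans h.symm))
          · exact hcore o y z ho hy hz hoy (Ne.symm hzo) (Ne.symm hzy) hyx hzx
    by_cases hSX : (X' ∩ S).Nonempty
    · -- counting and the modified cover T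
      obtain ⟨x₀, hx₀⟩ := hSX
      have hsum : 2 * (M' \ S).card ≤ (X' ∩ S).card := by
        calc 2 * (M' \ S).card = ∑ _m ∈ M' \ S, 2 := by
              rw [Finset.sum_const, smul_eq_mul, mul_comm]
        _ ≤ ∑ m ∈ M' \ S, ((leaves m) ∩ S).card := Finset.sum_le_sum (fun m hm => by
              obtain ⟨hm1, hm2⟩ := Finset.mem_sdiff.mp hm
              exact hclaim m hm1 hm2)
        _ = ((M' \ S).biUnion (fun m => (leaves m) ∩ S)).card := (Finset.card_biUnion
              (fun m _ m' _ hne => Finset.disjoint_left.mpr (fun a ha ha' =>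
                hne (hleafuniq m m' a (Finset.mem_inter.mp ha).1 (Finset.mem_inter.mp ha').1)))).symm
        _ ≤ (X' ∩ S).card := Finset.card_le_card (fun a ha => by
              obtain ⟨m, _, ha2⟩ := Finset.mem_biUnion.mp ha
              obtain ⟨h1, h2⟩ := Finset.mem_inter.mp ha2
              exact Finset.mem_inter.mpr ⟨hleafX' m a h1, h2⟩)
      set T := (S \ X') ∪ M' ∪ {v} with hT
      have hTsub : T ⊆ (S \ X') ∪ (M' \ S) ∪ {v} := by
        intro z hz
        simp only [hT, Finset.mem_union, Finset.mem_sdiff, Finset.mem_singleton] at hz ⊢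
        rcases hz with (hz | hz) | hz
        · tauto
        · by_cases hzS : z ∈ S
          · exact Or.inl (Or.inl ⟨hzS, fun h => hX'M' z h hz⟩)
          · tauto
        · tauto
      have hTcard : T.card ≤ S.card := by
        have h1 := Finset.card_le_card hTsub
        have h2 := Finset.card_union_le ((S \ X') ∪ (M' \ S)) ({v} : Finset V)
        have h3 := Finset.card_union_le (S \ X') (M' \ S)
        have h4 := Finset.card_sdiff_add_card_inter S X'
        have h5 : (X' ∩ S).card = (S ∩ X').card := by rw [Finset.inter_comm]
        have h6 : 1 ≤ (X' ∩ S).card := Finset.card_pos.mpr ⟨x₀, hx₀⟩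
        have h7 : ({v} : Finset V).card = 1 := Finset.card_singleton v
        omega
      refine ⟨T, le_trans hTcard hScard, ?_⟩
      intro u w p hp hlen
      by_contra hno
      push_neg at hno
      have hd45 : d = 4 ∨ d = 5 := hd
      have hlen0 : p.length ≠ 0 := by omega
      have hTm : ∀ z, z ∈ M' ∨ z = v → z ∈ T := by
        intro z hz
        simp only [hT, Finset.mem_union, Finset.mem_singleton]
        tauto
      have hXn : ∀ z ∈ p.support, z ∉ X' := by
        intro z hz hzX
        obtain ⟨z', hz', hadj⟩ := exists_adj_on_walk p hlen0 hz
        exact hno z' hz' (Finset.mem_coe.mpr (hTm z' (hNbr z hzX z' hadj)))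
      have hSn : ∀ z ∈ p.support, z ∉ S := by
        intro z hz hzS
        refine hno z hz (Finset.mem_coe.mpr ?_)
        simp only [hT, Finset.mem_union, Finset.mem_sdiff]
        exact Or.inl (Or.inl ⟨hzS, hXn z hz⟩)
      have hxp : x ∉ p.support := fun h => hXn x h hx
      obtain ⟨z, hz, hzS⟩ := cover_of_not_mem hSpvc p hp hlen (Or.inl hxp)
      exact hSn z hz (Finset.mem_coe.mp hzS)
    · -- S ∩ X' = ∅ : S itself covers G
      have hXS : ∀ y ∈ X', y ∉ S := fun y hy hyS => hSX ⟨y, Finset.mem_inter.mpr ⟨hy, hyS⟩⟩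
      have hM'S : ∀ m ∈ M', m ∈ S := by
        intro m hm
        by_contra hmS
        have h2 := hclaim m hm hmS
        have he : (leaves m) ∩ S = ∅ := Finset.eq_empty_of_forall_notMem (fun a ha => by
          obtain ⟨h1', h2'⟩ := Finset.mem_inter.mp ha
          exact hXS a (hleafX' m a h1') h2')
        rw [he] at h2
        simp at h2
      obtain ⟨m₀, hm₀, hxm₀⟩ := hpartner
      obtain ⟨y, hyL, hyx⟩ : ∃ y ∈ leaves m₀, y ≠ x := by
        have hd45 : d = 4 ∨ d = 5 := hd
        have hc : 0 < ((leaves m₀).erase x).card := by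
          rw [Finset.card_erase_of_mem hxm₀, hleafcard m₀ hm₀]; omega
        obtain ⟨y, hy⟩ := Finset.card_pos.mp hc
        exact ⟨y, Finset.mem_of_mem_erase hy, Finset.ne_of_mem_erase hy⟩
      have hyX := hleafX' m₀ y hyL
      have hyS := hXS y hyX
      have hyv : y ≠ v := fun h => hvX' (h ▸ hyX)
      have hyvadj : G.Adj v y := hvx' y hyX
      refine ⟨S, hScard, ?_⟩
      intro u w p hp hlen
      by_contra hno
      push_neg at hno
      have hSn : ∀ z ∈ p.support, z ∉ S := fun z hz hzS => hno z hz (Finset.mem_coe.mpr hzS)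
      have hxp : x ∈ p.support := by
        by_contra hxp
        obtain ⟨z, hz, hzS⟩ := cover_of_not_mem hSpvc p hp hlen (Or.inl hxp)
        exact hSn z hz (Finset.mem_coe.mp hzS)
      have hMn : ∀ z ∈ p.support, z ∉ M' := fun z hz hzM => hSn z hz (hM'S z hzM)
      rcases hd with hd' | hd'
      · subst hd'
        cases p with
        | nil => simp only [Walk.length_nil] at hlen; omega
        | @cons _ b _ h1 p =>
          cases p with
          | nil => simp only [Walk.length_nil, Walk.length_cons] at hlen; omega
          | @cons _ c _ h2 p =>
            cases p with
            | nil => simp only [Walk.length_nil, Walk.length_cons] at hlen; omega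
            | @cons _ e _ h3 p =>
              cases p with
              | @cons _ f _ h4 p =>
                simp only [Walk.length_cons] at hlen
                omega
              | nil =>
                rw [Walk.isPath_def] at hp
                simp only [Walk.support_cons, Walk.support_nil, List.nodup_cons,
                  List.mem_cons, List.mem_singleton, List.not_mem_nil, or_false,
                  not_or, List.nodup_nil, and_true] at hp
                simp only [Walk.support_cons, Walk.support_nil, List.mem_cons,
                  List.mem_singleton, List.not_mem_nil, or_false] at hxp
                obtain ⟨⟨hub, huc, huw⟩, ⟨hbc, hbw⟩, hcw, -⟩ := hp
                have hnu : u ∉ S := hSn u (by simp)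
                have hnb : b ∉ S := hSn b (by simp)
                have hnc : c ∉ S := hSn c (by simp)
                have hnw : w ∉ S := hSn w (by simp)
                have hmu : u ∉ M' := hMn u (by simp)
                have hmb : b ∉ M' := hMn b (by simp)
                have hmc : c ∉ M' := hMn c (by simp)
                have hmw : w ∉ M' := hMn w (by simp)
                rcases hxp with rfl | rfl | rfl | rfl
                · -- x = u (endpoint)
                  have hbv : v = b := by
                    rcases hNbr x hx b h1 with h | h
                    · exact absurd h hmb
                    · exact h.symm
                  subst hbv
                  have hcX : c ∉ X' := by
                    intro hcX
                    rcases hNbr c hcX w h3 with h | h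
                    · exact hmw h
                    · exact hbw h.symm
                  have hwX : w ∉ X' := by
                    intro hwX
                    rcases hNbr w hwX c h3.symm with h | h
                    · exact hmc h
                    · exact hbc h.symm
                  have e1 : G'.Adj y v := hadjG' hyvadj.symm (fun h => hyx h.1)
                    (fun h => hxnev h.1.symm)
                  have e2 : G'.Adj v c := hadjG' h2 (fun h => hxnev h.1.symm)
                    (fun h => huc h.1.symm)
                  have e3 : G'.Adj c w := hadjG' h3 (fun h => huc h.1.symm)
                    (fun h => huw h.1.symm)
                  rcases pvc4_hit hSpvc e1 e2 e3 (fun h => hcX (h ▸ hyX))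
                    (fun h => hwX (h ▸ hyX)) hbw with h | h | h | h
                  · exact hyS (Finset.mem_coe.mp h)
                  · exact hvS (Finset.mem_coe.mp h)
                  · exact hnc (Finset.mem_coe.mp h)
                  · exact hnw (Finset.mem_coe.mp h)
                · -- x = b (internal)
                  rcases hNbr x hx u h1.symm with h | rfl
                  · exact hmu h
                  · rcases hNbr x hx c h2 with h | rfl
                    · exact hmc h
                    · exact huc rfl
                · -- x = c (internal)
                  rcases hNbr x hx b h2.symm with h | rfl
                  · exact hmb h
                  · rcases hNbr x hx w h3 with h | rfl
                    · exact hmw h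
                    · exact hbw rfl
                · -- x = w (endpoint)
                  have hcv : v = c := by
                    rcases hNbr x hx c h3.symm with h | h
                    · exact absurd h hmc
                    · exact h.symm
                  subst hcv
                  have hbX : b ∉ X' := by
                    intro hbX
                    rcases hNbr b hbX u h1.symm with h | h
                    · exact hmu h
                    · exact huc h
                  have huX : u ∉ X' := by
                    intro huX
                    rcases hNbr u huX b h1 with h | h
                    · exact hmb h
                    · exact hbc h
                  have e1 : G'.Adj u b := hadjG' h1 (fun h => huw h.1) (fun h => hbw h.1)
                  have e2 : G'.Adj b v := hadjG' h2 (fun h => hbw h.1) (fun h => hcw h.1)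
                  have e3 : G'.Adj v y := hadjG' hyvadj (fun h => hcw h.1) (fun h => hyx h.1)
                  rcases pvc4_hit hSpvc e1 e2 e3 huc (fun h => huX (h.symm ▸ hyX))
                    (fun h => hbX (h.symm ▸ hyX)) with h | h | h | h
                  · exact hnu (Finset.mem_coe.mp h)
                  · exact hnb (Finset.mem_coe.mp h)
                  · exact hvS (Finset.mem_coe.mp h)
                  · exact hyS (Finset.mem_coe.mp h)
      · subst hd'
        cases p with
        | nil => simp only [Walk.length_nil] at hlen; omega
        | @cons _ b _ h1 p =>
          cases p with
          | nil => simp only [Walk.length_nil, Walk.length_cons] at hlen; omega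
          | @cons _ c _ h2 p =>
            cases p with
            | nil => simp only [Walk.length_nil, Walk.length_cons] at hlen; omega
            | @cons _ e _ h3 p =>
              cases p with
              | nil => simp only [Walk.length_nil, Walk.length_cons] at hlen; omega
              | @cons _ f _ h4 p =>
                cases p with
                | @cons _ g _ h5 p =>
                  simp only [Walk.length_cons] at hlen
                  omega
                | nil =>
                  rw [Walk.isPath_def] at hp
                  simp only [Walk.support_cons, Walk.support_nil, List.nodup_cons,
                    List.mem_cons, List.mem_singleton, List.not_mem_nil, or_false,
                    not_or, List.nodup_nil, and_true] at hp
                  simp only [Walk.support_cons, Walk.support_nil, List.mem_cons,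
                    List.mem_singleton, List.not_mem_nil, or_false] at hxp
                  obtain ⟨⟨hub, huc, hue, huw⟩, ⟨hbc, hbe, hbw⟩, ⟨hce, hcw⟩, hew, -⟩ := hp
                  have hnu : u ∉ S := hSn u (by simp)
                  have hnb : b ∉ S := hSn b (by simp)
                  have hnc : c ∉ S := hSn c (by simp)
                  have hne : e ∉ S := hSn e (by simp)
                  have hnw : w ∉ S := hSn w (by simp)
                  have hmu : u ∉ M' := hMn u (by simp)
                  have hmb : b ∉ M' := hMn b (by simp)
                  have hmc : c ∉ M' := hMn c (by simp)
                  have hme : e ∉ M' := hMn e (by simp)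
                  have hmw : w ∉ M' := hMn w (by simp)
                  rcases hxp with rfl | rfl | rfl | rfl | rfl
                  · -- x = u (endpoint)
                    have hbv : v = b := by
                      rcases hNbr x hx b h1 with h | h
                      · exact absurd h hmb
                      · exact h.symm
                    subst hbv
                    have hcX : c ∉ X' := by
                      intro hcX
                      rcases hNbr c hcX e h3 with h | h
                      · exact hme h
                      · exact hbe h.symm
                    have heX : e ∉ X' := by
                      intro heX
                      rcases hNbr e heX c h3.symm with h | h
                      · exact hmc h
                      · exact hbc h.symm
                    have hwX : w ∉ X' := by
                      intro hwX
                      rcases hNbr w hwX e h4.symm with h | h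
                      · exact hme h
                      · exact hbe h.symm
                    have e1 : G'.Adj y v := hadjG' hyvadj.symm (fun h => hyx h.1)
                      (fun h => hxnev h.1.symm)
                    have e2 : G'.Adj v c := hadjG' h2 (fun h => hxnev h.1.symm)
                      (fun h => huc h.1.symm)
                    have e3 : G'.Adj c e := hadjG' h3 (fun h => huc h.1.symm)
                      (fun h => hue h.1.symm)
                    have e4 : G'.Adj e w := hadjG' h4 (fun h => hue h.1.symm)
                      (fun h => huw h.1.symm)
                    rcases pvc5_hit hSpvc e1 e2 e3 e4 (fun h => hcX (h ▸ hyX))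
                      (fun h => heX (h ▸ hyX)) (fun h => hwX (h ▸ hyX)) hbe hbw hcw
                      with h | h | h | h | h
                    · exact hyS (Finset.mem_coe.mp h)
                    · exact hvS (Finset.mem_coe.mp h)
                    · exact hnc (Finset.mem_coe.mp h)
                    · exact hne (Finset.mem_coe.mp h)
                    · exact hnw (Finset.mem_coe.mp h)
                  · -- x = b (internal)
                    rcases hNbr x hx u h1.symm with h | rfl
                    · exact hmu h
                    · rcases hNbr x hx c h2 with h | rfl
                      · exact hmc h
                      · exact huc rfl
                  · -- x = c (internal)
                    rcases hNbr x hx b h2.symm with h | rfl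
                    · exact hmb h
                    · rcases hNbr x hx e h3 with h | rfl
                      · exact hme h
                      · exact hbe rfl
                  · -- x = e (internal)
                    rcases hNbr x hx c h3.symm with h | rfl
                    · exact hmc h
                    · rcases hNbr x hx w h4 with h | rfl
                      · exact hmw h
                      · exact hcw rfl
                  · -- x = w (endpoint)
                    have hev : v = e := by
                      rcases hNbr x hx e h4.symm with h | h
                      · exact absurd h hme
                      · exact h.symm
                    subst hev
                    have hcX : c ∉ X' := by
                      intro hcX
                      rcases hNbr c hcX b h2.symm with h | h
                      · exact hmb h
                      · exact hbe h
                    have hbX : b ∉ X' := by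
                      intro hbX
                      rcases hNbr b hbX u h1.symm with h | h
                      · exact hmu h
                      · exact hue h
                    have huX : u ∉ X' := by
                      intro huX
                      rcases hNbr u huX b h1 with h | h
                      · exact hmb h
                      · exact hbe h
                    have e1 : G'.Adj u b := hadjG' h1 (fun h => huw h.1) (fun h => hbw h.1)
                    have e2 : G'.Adj b c := hadjG' h2 (fun h => hbw h.1) (fun h => hcw h.1)
                    have e3 : G'.Adj c v := hadjG' h3 (fun h => hcw h.1) (fun h => hew h.1)
                    have e4 : G'.Adj v y := hadjG' hyvadj (fun h => hew h.1) (fun h => hyx h.1)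
                    rcases pvc5_hit hSpvc e1 e2 e3 e4 huc hue (fun h => huX (h.symm ▸ hyX))
                      hbe (fun h => hbX (h.symm ▸ hyX)) (fun h => hcX (h.symm ▸ hyX))
                      with h | h | h | h | h
                    · exact hnu (Finset.mem_coe.mp h)
                    · exact hnb (Finset.mem_coe.mp h)
                    · exact hnc (Finset.mem_coe.mp h)
                    · exact hvS (Finset.mem_coe.mp h)
                    · exact hyS (Finset.mem_coe.mp h)
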